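/- arXiv:math/0604410 — 2 statements merged into one kernel-verified Lean document; each statement's English description precedes it below -/
import Mathlib

section
/- Let n ∈ ℕ, let α : Fin (n+1) → ℝ be strictly positive, let w : Fin (n+1) → ℕ, and set L = ∑_k w_k and A = ∑_k α_k. With S_n = {x : Fin n → ℝ | (∀ i, 0 < x_i) ∧ ∑_i x_i < 1} ⊆ ℝ^n with Lebesgue measure, and writing x_n := 1 − ∑_{i : Fin n} x_i for the last coordinate, ∫_{S_n} (L! / ∏_k (w_k)!) · (∏_{k : Fin (n+1)} x_k^{w_k}) · (Γ(A) / ∏_k Γ(α_k)) · (∏_{k : Fin (n+1)} x_k^{α_k − 1}) dx = (L! / ∏_k (w_k)!) · (Γ(A) / Γ(L + A)) · ∏_{k : Fin (n+1)} (Γ(w_k + α_k) / Γ(α_k)). (Marginalizing a multinomial over a Dirichlet-distributed probability vector yields the Dirichlet-multinomial/Pólya distribution.) -/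
open Real MeasureTheory Finset

lemma betaReal_integrable {a b : ℝ} (ha : 0 < a) (hb : 0 < b) :
    IntegrableOn (fun t : ℝ => t ^ (a - 1) * (1 - t) ^ (b - 1)) (Set.Ioo 0 1) := by
  have h := (Complex.betaIntegral_convergent (u := (a : ℂ)) (v := (b : ℂ)) (by simpa) (by simpa))
  have h2 : IntegrableOn (fun x : ℝ => (x:ℂ) ^ ((a:ℂ) - 1) * (1 - (x:ℂ)) ^ ((b:ℂ) - 1))
      (Set.Ioo 0 1) := (h.1.mono_set Set.Ioo_subset_Ioc_self)
  have h3 := h2.re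
  apply (integrableOn_congr_fun ?_ measurableSet_Ioo).mp h3
  intro x hx
  obtain ⟨hx0, hx1⟩ := hx
  have e1 : ((x:ℂ)) ^ ((a:ℂ) - 1) = ((x ^ (a-1) : ℝ) : ℂ) := by
    rw [show ((a:ℂ) - 1) = ((a - 1 : ℝ) : ℂ) by push_cast; ring,
      Complex.ofReal_cpow hx0.le]
  have e2 : (1 - (x:ℂ)) ^ ((b:ℂ) - 1) = (((1 - x) ^ (b-1) : ℝ) : ℂ) := by
    rw [show (1 - (x:ℂ)) = ((1 - x : ℝ) : ℂ) by push_cast; ring,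
      show ((b:ℂ) - 1) = ((b - 1 : ℝ) : ℂ) by push_cast; ring,
      Complex.ofReal_cpow (by linarith)]
  simp [e1, e2, ← Complex.ofReal_mul]

lemma betaReal_eval {a b : ℝ} (ha : 0 < a) (hb : 0 < b) :
    ∫ t in Set.Ioo (0:ℝ) 1, t ^ (a - 1) * (1 - t) ^ (b - 1)
      = Real.Gamma a * Real.Gamma b / Real.Gamma (a + b) := by
  have key := Complex.Gamma_mul_Gamma_eq_betaIntegral (s := (a:ℂ)) (t := (b:ℂ))
    (by simpa) (by simpa)
  have hcong : Complex.betaIntegral (a:ℂ) (b:ℂ)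
      = ((∫ t in Set.Ioo (0:ℝ) 1, t ^ (a - 1) * (1 - t) ^ (b - 1) : ℝ) : ℂ) := by
    rw [Complex.betaIntegral, intervalIntegral.integral_of_le zero_le_one,
      MeasureTheory.integral_Ioc_eq_integral_Ioo]
    rw [show ((∫ t in Set.Ioo (0:ℝ) 1, t ^ (a - 1) * (1 - t) ^ (b - 1) : ℝ) : ℂ)
      = ∫ t in Set.Ioo (0:ℝ) 1, ((t ^ (a - 1) * (1 - t) ^ (b - 1) : ℝ) : ℂ) from
      (integral_ofReal).symm]
    apply setIntegral_congr_fun measurableSet_Ioo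
    intro x hx
    obtain ⟨hx0, hx1⟩ := hx
    have e1 : ((x:ℂ)) ^ ((a:ℂ) - 1) = ((x ^ (a-1) : ℝ) : ℂ) := by
      rw [show ((a:ℂ) - 1) = ((a - 1 : ℝ) : ℂ) by push_cast; ring,
        Complex.ofReal_cpow hx0.le]
    have e2 : (1 - (x:ℂ)) ^ ((b:ℂ) - 1) = (((1 - x) ^ (b-1) : ℝ) : ℂ) := by
      rw [show (1 - (x:ℂ)) = ((1 - x : ℝ) : ℂ) by push_cast; ring,
        show ((b:ℂ) - 1) = ((b - 1 : ℝ) : ℂ) by push_cast; ring,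
        Complex.ofReal_cpow (by linarith)]
    simp [e1, e2]
  rw [hcong, ← Complex.ofReal_add, Complex.Gamma_ofReal, Complex.Gamma_ofReal,
    Complex.Gamma_ofReal, ← Complex.ofReal_mul, ← Complex.ofReal_mul] at key
  have h := Complex.ofReal_injective key
  have hG : Real.Gamma (a + b) ≠ 0 := (Real.Gamma_pos_of_pos (by linarith)).ne'
  field_simp
  linarith [h]

lemma simplex_measurable' (p : ℕ) (c : ℝ) :
    MeasurableSet {x : Fin p → ℝ | (∀ i, 0 < x i) ∧ ∑ i, x i < c} := by
  have h : {x : Fin p → ℝ | (∀ i, 0 < x i) ∧ ∑ i, x i < c}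
      = (⋂ i, {x : Fin p → ℝ | 0 < x i}) ∩ {x : Fin p → ℝ | ∑ i, x i < c} := by
    ext x; simp [Set.mem_iInter]
  rw [h]
  exact (MeasurableSet.iInter fun i =>
      measurableSet_lt measurable_const (measurable_pi_apply i)).inter
    (measurableSet_lt (Finset.measurable_sum _ fun i _ => measurable_pi_apply i) measurable_const)

lemma simplex_measurable (p : ℕ) :
    MeasurableSet {x : Fin p → ℝ | (∀ i, 0 < x i) ∧ ∑ i, x i < 1} :=
  simplex_measurable' p 1

lemma snoc_coord_measurable (p : ℕ) (k : Fin (p+1)) :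
    Measurable fun x : Fin p → ℝ => (Fin.snoc x (1 - ∑ i, x i) : Fin (p+1) → ℝ) k := by
  induction k using Fin.lastCases with
  | last =>
    simp only [Fin.snoc_last]; exact (measurable_const.sub (Finset.measurable_sum Finset.univ
      fun i _ => measurable_pi_apply i))
  | cast i => simpa [Fin.snoc_castSucc] using measurable_pi_apply i

lemma snoc_prod_measurable (p : ℕ) (β : Fin (p+1) → ℝ) :
    Measurable fun x : Fin p → ℝ =>
      ∏ k, (Fin.snoc x (1 - ∑ i, x i) : Fin (p+1) → ℝ) k ^ (β k - 1) := by
  apply Finset.measurable_prod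
  intro k _
  have h := snoc_coord_measurable p k
  fun_prop

lemma snoc_pos {p : ℕ} {x : Fin p → ℝ} (hx : (∀ i, 0 < x i) ∧ ∑ i, x i < 1) :
    ∀ k, 0 < (Fin.snoc x (1 - ∑ i, x i) : Fin (p+1) → ℝ) k := by
  intro k
  induction k using Fin.lastCases with
  | last => simpa using by linarith [hx.2]
  | cast i => simpa [Fin.snoc_castSucc] using hx.1 i

lemma dirichlet_lintegral : ∀ (m : ℕ) (β : Fin (m+1) → ℝ), (∀ k, 0 < β k) →
    ∫⁻ x in {x : Fin m → ℝ | (∀ i, 0 < x i) ∧ ∑ i, x i < 1},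
        ENNReal.ofReal (∏ k, (Fin.snoc x (1 - ∑ i, x i) : Fin (m+1) → ℝ) k ^ (β k - 1))
      = ENNReal.ofReal ((∏ k, Real.Gamma (β k)) / Real.Gamma (∑ k, β k)) := by
  intro m
  induction m with
  | zero =>
    intro β hβ
    have hset : {x : Fin 0 → ℝ | (∀ i, 0 < x i) ∧ ∑ i, x i < 1} = Set.univ := by
      ext x
      simp only [Set.mem_setOf_eq, Set.mem_univ, iff_true]
      exact ⟨fun i => i.elim0, by rw [Finset.univ_eq_empty, Finset.sum_empty]; norm_num⟩
    have hval : ∀ x : Fin 0 → ℝ,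
        (∏ k, (Fin.snoc x (1 - ∑ i, x i) : Fin 1 → ℝ) k ^ (β k - 1)) = 1 := by
      intro x
      rw [Fin.prod_univ_one]
      have h0 : (Fin.snoc x (1 - ∑ i, x i) : Fin 1 → ℝ) 0 = 1 := by
        rw [show (0 : Fin 1) = Fin.last 0 from rfl, Fin.snoc_last,
          Finset.univ_eq_empty, Finset.sum_empty, sub_zero]
      rw [h0, Real.one_rpow]
    simp only [hset, hval, Measure.restrict_univ, lintegral_one]
    rw [Fin.prod_univ_one, Fin.sum_univ_one,
      div_self (Real.Gamma_pos_of_pos (hβ 0)).ne', ENNReal.ofReal_one]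
    simp [MeasureTheory.volume_pi, Measure.pi_univ]
  | succ m ih =>
    intro β hβ
    have hβ0 := hβ 0
    set B' : ℝ := ∑ j : Fin (m+1), β j.succ with hB'
    have hB'pos : 0 < B' := Finset.sum_pos (fun j _ => hβ j.succ) Finset.univ_nonempty
    set e := MeasurableEquiv.piFinSuccAbove (fun _ : Fin (m+1) => ℝ) 0 with he
    have hsymm : ∀ p : ℝ × (Fin m → ℝ), e.symm p = Fin.cons p.1 p.2 := by
      intro p; ext j; simp [he, MeasurableEquiv.piFinSuccAbove]
    set S : Set (Fin (m+1) → ℝ) := {x | (∀ i, 0 < x i) ∧ ∑ i, x i < 1} with hS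
    set S' : Set (Fin m → ℝ) := {x | (∀ i, 0 < x i) ∧ ∑ i, x i < 1} with hS'
    set F : (Fin (m+1) → ℝ) → ENNReal := fun x =>
      ENNReal.ofReal (∏ k, (Fin.snoc x (1 - ∑ i, x i) : Fin (m+1+1) → ℝ) k ^ (β k - 1)) with hF
    set G : ℝ × (Fin m → ℝ) → ENNReal := fun p =>
      ENNReal.ofReal (p.1 ^ (β 0 - 1) *
        ∏ j, (Fin.snoc p.2 (1 - p.1 - ∑ i, p.2 i) : Fin (m+1) → ℝ) j ^ (β j.succ - 1)) with hG
    set U : ℝ → Set (Fin m → ℝ) := fun t => {y | (∀ i, 0 < y i) ∧ ∑ i, y i < 1 - t} with hU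
    set K : ENNReal := ∫⁻ z in S',
      ENNReal.ofReal (∏ j, (Fin.snoc z (1 - ∑ i, z i) : Fin (m+1) → ℝ) j ^ (β j.succ - 1)) with hK
    have hUmeas : ∀ t, MeasurableSet (U t) := fun t => simplex_measurable' m (1 - t)
    have hFG : ∀ p : ℝ × (Fin m → ℝ), F (e.symm p) = G p := by
      rintro ⟨t, y⟩
      rw [hsymm]
      simp only [hF, hG]
      have hsum : ∑ i, (Fin.cons t y : Fin (m+1) → ℝ) i = t + ∑ i, y i := by
        rw [Fin.sum_univ_succ]; simp
      rw [hsum, show 1 - (t + ∑ i, y i) = 1 - t - ∑ i, y i from by ring,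
        ← Fin.cons_snoc_eq_snoc_cons, Fin.prod_univ_succ]
      simp only [Fin.cons_zero, Fin.cons_succ]
    have hA : ∫⁻ x in S, F x = ∫⁻ p in (⇑e.symm) ⁻¹' S, G p := by
      have hmp := (volume_preserving_piFinSuccAbove (fun _ : Fin (m+1) => ℝ) 0).symm e
      have h2 := hmp.setLIntegral_comp_emb (MeasurableEquiv.measurableEmbedding e.symm)
        F ((⇑e.symm) ⁻¹' S)
      rw [Set.image_preimage_eq _ e.symm.surjective] at h2
      rw [← h2]
      exact lintegral_congr fun p => hFG p
    have hT : (⇑e.symm) ⁻¹' S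
        = {p : ℝ × (Fin m → ℝ) | p.1 ∈ Set.Ioo (0:ℝ) 1 ∧ p.2 ∈ U p.1} := by
      ext ⟨t, y⟩
      simp only [Set.mem_preimage, hsymm, hS, hU, Set.mem_setOf_eq, Set.mem_Ioo]
      constructor
      · rintro ⟨hpos, hsum⟩
        have h0 : 0 < t := by simpa using hpos 0
        have hy : ∀ i, 0 < y i := fun i => by simpa using hpos i.succ
        have hsum' : t + ∑ i, y i < 1 := by
          rw [Fin.sum_univ_succ] at hsum; simpa using hsum
        have hynn : 0 ≤ ∑ i, y i := Finset.sum_nonneg fun i _ => (hy i).le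
        exact ⟨⟨h0, by linarith⟩, hy, by linarith⟩
      · rintro ⟨⟨h0, h1⟩, hy, hsum⟩
        refine ⟨?_, ?_⟩
        · intro i
          refine Fin.cases ?_ ?_ i
          · simpa using h0
          · intro j; simpa using hy j
        · rw [Fin.sum_univ_succ]; simp only [Fin.cons_zero, Fin.cons_succ]; linarith
    have hGmeas : Measurable G := by
      apply ENNReal.measurable_ofReal.comp
      apply Measurable.mul
      · fun_prop
      · apply Finset.measurable_prod; intro j _
        have hcoord : Measurable fun p : ℝ × (Fin m → ℝ) =>
            (Fin.snoc p.2 (1 - p.1 - ∑ i, p.2 i) : Fin (m+1) → ℝ) j := by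
          induction j using Fin.lastCases with
          | last =>
            simp only [Fin.snoc_last]
            apply Measurable.sub
            · fun_prop
            · exact (Finset.measurable_sum Finset.univ fun i _ =>
                (measurable_pi_apply i).comp measurable_snd)
          | cast i => simp only [Fin.snoc_castSucc]; fun_prop
        fun_prop
    have hTmeas : MeasurableSet ((⇑e.symm) ⁻¹' S) :=
      e.symm.measurable (simplex_measurable (m+1))
    have htonelli : ∫⁻ p in (⇑e.symm) ⁻¹' S, G p
        = ∫⁻ t in Set.Ioo (0:ℝ) 1, ∫⁻ y in U t, G (t, y) := by
      rw [← lintegral_indicator hTmeas, Measure.volume_eq_prod,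
        lintegral_prod _ ((hGmeas.indicator hTmeas)).aemeasurable,
        ← lintegral_indicator measurableSet_Ioo]
      congr 1
      funext t
      by_cases ht : t ∈ Set.Ioo (0:ℝ) 1
      · rw [Set.indicator_of_mem ht, ← lintegral_indicator (hUmeas t)]
        congr 1; funext y
        by_cases hy : y ∈ U t
        · rw [Set.indicator_of_mem hy, Set.indicator_of_mem]
          rw [hT]; exact ⟨ht, hy⟩
        · rw [Set.indicator_of_notMem hy, Set.indicator_of_notMem]
          rw [hT]; exact fun hmem => hy hmem.2
      · rw [Set.indicator_of_notMem ht]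
        have hz : ∀ y, ((⇑e.symm) ⁻¹' S).indicator G (t, y) = 0 := by
          intro y; apply Set.indicator_of_notMem
          rw [hT]; exact fun hmem => ht hmem.1
        simp [hz]
    have hinner : ∀ t ∈ Set.Ioo (0:ℝ) 1, (∫⁻ y in U t, G (t, y))
        = ENNReal.ofReal (t ^ (β 0 - 1) * (1 - t) ^ (B' - 1)) * K := by
      intro t ht
      obtain ⟨ht0, ht1⟩ := ht
      set c : ℝ := 1 - t with hc
      have hc0 : 0 < c := by rw [hc]; linarith
      have hcm : (0:ℝ) < c ^ m := by positivity
      set f : (Fin m → ℝ) → ENNReal := (U t).indicator (fun y => G (t, y)) with hf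
      have hfmeas : Measurable f :=
        (hGmeas.comp (measurable_prodMk_left)).indicator (hUmeas t)
      have hmap := Measure.map_addHaar_smul (volume : Measure (Fin m → ℝ)) hc0.ne'
      rw [Module.finrank_fin_fun] at hmap
      have key : ∫⁻ z, f (c • z) = ENNReal.ofReal |(c ^ m)⁻¹| * ∫⁻ y, f y := by
        rw [← smul_eq_mul, ← lintegral_smul_measure, ← hmap,
          lintegral_map hfmeas (measurable_const_smul c)]
      have hinv : ENNReal.ofReal (c ^ m) * ENNReal.ofReal |(c ^ m)⁻¹| = 1 := by
        rw [← ENNReal.ofReal_mul hcm.le, abs_of_nonneg (by positivity),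
          mul_inv_cancel₀ hcm.ne', ENNReal.ofReal_one]
      have hyint : ∫⁻ y, f y = ENNReal.ofReal (c ^ m) * ∫⁻ z, f (c • z) := by
        rw [key, ← mul_assoc, hinv, one_mul]
      -- compute f (c • z)
      have hfc : ∀ z : Fin m → ℝ, f (c • z)
          = S'.indicator (fun z => ENNReal.ofReal (t ^ (β 0 - 1) * c ^ (B' - (m+1 : ℝ))) *
              ENNReal.ofReal (∏ j, (Fin.snoc z (1 - ∑ i, z i) : Fin (m+1) → ℝ) j
                ^ (β j.succ - 1))) z := by
        intro z
        have hmem : (c • z) ∈ U t ↔ z ∈ S' := by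
          simp only [hU, hS', Set.mem_setOf_eq, Pi.smul_apply, smul_eq_mul]
          constructor
          · rintro ⟨hpos, hsum⟩
            refine ⟨fun i => ?_, ?_⟩
            · have := hpos i; nlinarith [hpos i]
            · have hs : c * ∑ i, z i < 1 - t := by rwa [← Finset.mul_sum] at hsum
              rw [← hc] at hs; nlinarith
          · rintro ⟨hpos, hsum⟩
            refine ⟨fun i => mul_pos hc0 (hpos i), ?_⟩
            rw [← Finset.mul_sum, ← hc]; nlinarith
        by_cases hz : z ∈ S'
        · rw [hf, Set.indicator_of_mem (hmem.mpr hz), Set.indicator_of_mem hz]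
          obtain ⟨hzpos, hzsum⟩ := hz
          have hspos := snoc_pos ⟨hzpos, hzsum⟩
          have hsum2 : ∑ i, (c • z) i = c * ∑ i, z i := by
            simp only [Pi.smul_apply, smul_eq_mul]; rw [← Finset.mul_sum]
          have harg : 1 - t - ∑ i, (c • z) i = c * (1 - ∑ i, z i) := by
            rw [hsum2, ← hc]; ring
          have hsnoc : (Fin.snoc (c • z) (1 - t - ∑ i, (c • z) i) : Fin (m+1) → ℝ)
              = c • (Fin.snoc z (1 - ∑ i, z i) : Fin (m+1) → ℝ) := by
            rw [harg]
            funext j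
            refine Fin.lastCases ?_ ?_ j
            · simp
            · intro i; simp [Fin.snoc_castSucc]
          rw [hG]
          simp only [hsnoc]
          have hprod : ∏ j, (c • (Fin.snoc z (1 - ∑ i, z i) : Fin (m+1) → ℝ)) j
                ^ (β j.succ - 1)
              = c ^ (B' - (m+1 : ℝ)) *
                ∏ j, (Fin.snoc z (1 - ∑ i, z i) : Fin (m+1) → ℝ) j ^ (β j.succ - 1) := by
            have h1 : ∀ j : Fin (m+1),
                (c • (Fin.snoc z (1 - ∑ i, z i) : Fin (m+1) → ℝ)) j ^ (β j.succ - 1)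
                = c ^ (β j.succ - 1) *
                  (Fin.snoc z (1 - ∑ i, z i) : Fin (m+1) → ℝ) j ^ (β j.succ - 1) := by
              intro j
              simp only [Pi.smul_apply, smul_eq_mul]
              exact Real.mul_rpow hc0.le (hspos j).le
            rw [Finset.prod_congr rfl (fun j _ => h1 j), Finset.prod_mul_distrib,
              ← Real.rpow_sum_of_pos hc0]
            congr 2
            rw [Finset.sum_sub_distrib, Finset.sum_const, Finset.card_univ]
            simp [hB']
          rw [hprod, ← ENNReal.ofReal_mul (by positivity)]
          congr 1
          ring
        · rw [hf, Set.indicator_of_notMem (fun hmm => hz (hmem.mp hmm)),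
            Set.indicator_of_notMem hz]
      calc (∫⁻ y in U t, G (t, y)) = ∫⁻ y, f y := by
            rw [hf, lintegral_indicator (hUmeas t)]
        _ = ENNReal.ofReal (c ^ m) * ∫⁻ z, f (c • z) := hyint
        _ = ENNReal.ofReal (c ^ m) *
              (ENNReal.ofReal (t ^ (β 0 - 1) * c ^ (B' - (m+1 : ℝ))) * K) := by
            congr 1
            simp only [hfc]
            rw [lintegral_indicator (by exact simplex_measurable m),
              lintegral_const_mul _ (by
                have := snoc_prod_measurable m (fun j : Fin (m+1) => β j.succ)
                exact ENNReal.measurable_ofReal.comp this)]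
        _ = ENNReal.ofReal (t ^ (β 0 - 1) * (1 - t) ^ (B' - 1)) * K := by
            rw [← mul_assoc, ← ENNReal.ofReal_mul hcm.le]
            congr 2
            rw [show c ^ m * (t ^ (β 0 - 1) * c ^ (B' - (m+1 : ℝ)))
                = t ^ (β 0 - 1) * (c ^ m * c ^ (B' - (m+1 : ℝ))) from by ring,
              ← Real.rpow_natCast c m, ← Real.rpow_add hc0, ← hc,
              show (m:ℝ) + (B' - (m+1 : ℝ)) = B' - 1 from by push_cast; ring]
    have hbetaM : Measurable fun t : ℝ =>
        ENNReal.ofReal (t ^ (β 0 - 1) * (1 - t) ^ (B' - 1)) := by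
      apply ENNReal.measurable_ofReal.comp
      fun_prop
    have houter : ∫⁻ t in Set.Ioo (0:ℝ) 1, (∫⁻ y in U t, G (t, y))
        = ENNReal.ofReal (Real.Gamma (β 0) * Real.Gamma B' / Real.Gamma (β 0 + B')) * K := by
      rw [setLIntegral_congr_fun measurableSet_Ioo hinner,
        lintegral_mul_const _ hbetaM]
      congr 1
      have hnn : 0 ≤ᵐ[volume.restrict (Set.Ioo (0:ℝ) 1)]
          fun t : ℝ => t ^ (β 0 - 1) * (1 - t) ^ (B' - 1) := by
        rw [Filter.EventuallyLE, ae_restrict_iff' measurableSet_Ioo]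
        apply ae_of_all
        rintro t ⟨ht0, ht1⟩
        exact mul_nonneg (Real.rpow_nonneg ht0.le _) (Real.rpow_nonneg (by linarith) _)
      rw [← ofReal_integral_eq_lintegral_ofReal (betaReal_integrable hβ0 hB'pos) hnn,
        betaReal_eval hβ0 hB'pos]
    have hKval : K = ENNReal.ofReal ((∏ j : Fin (m+1), Real.Gamma (β j.succ))
        / Real.Gamma B') := by
      rw [hK, hS']
      exact ih (fun j => β j.succ) (fun j => hβ j.succ)
    calc ∫⁻ x in S, F x = ∫⁻ p in (⇑e.symm) ⁻¹' S, G p := hA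
      _ = ∫⁻ t in Set.Ioo (0:ℝ) 1, ∫⁻ y in U t, G (t, y) := htonelli
      _ = ENNReal.ofReal (Real.Gamma (β 0) * Real.Gamma B' / Real.Gamma (β 0 + B')) * K :=
          houter
      _ = ENNReal.ofReal ((∏ k, Real.Gamma (β k)) / Real.Gamma (∑ k, β k)) := by
          rw [hKval, ← ENNReal.ofReal_mul (by positivity)]
          congr 1
          have hGB' : Real.Gamma B' ≠ 0 := (Real.Gamma_pos_of_pos hB'pos).ne'
          have hp : (∏ k, Real.Gamma (β k))
              = Real.Gamma (β 0) * ∏ j : Fin (m+1), Real.Gamma (β j.succ) :=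
            Fin.prod_univ_succ _
          have hsum : (∑ k, β k) = β 0 + B' := by rw [Fin.sum_univ_succ, ← hB']
          rw [hp, hsum]
          field_simp

/-- Marginalizing a multinomial over a Dirichlet-distributed probability vector yields the
Dirichlet-multinomial (Pólya) distribution. -/
theorem dirichlet_multinomial_marginal
    (n : ℕ) (α : Fin (n + 1) → ℝ) (hα : ∀ k, 0 < α k)
    (w : Fin (n + 1) → ℕ) (L : ℕ) (hL : L = ∑ k, w k) (A : ℝ) (hA : A = ∑ k, α k) :
    ∫ x in {x : Fin n → ℝ | (∀ i, 0 < x i) ∧ ∑ i, x i < 1},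
        (((Nat.factorial L) : ℝ) / ∏ k, ((Nat.factorial (w k)) : ℝ)) *
          (∏ k, (Fin.snoc x (1 - ∑ i, x i) : Fin (n + 1) → ℝ) k ^ w k) *
          (Real.Gamma A / ∏ k, Real.Gamma (α k)) *
          (∏ k, (Fin.snoc x (1 - ∑ i, x i) : Fin (n + 1) → ℝ) k ^ (α k - 1)) =
      (((Nat.factorial L) : ℝ) / ∏ k, ((Nat.factorial (w k)) : ℝ)) * (Real.Gamma A / Real.Gamma ((L : ℝ) + A)) *
        ∏ k, (Real.Gamma ((w k : ℝ) + α k) / Real.Gamma (α k)) := by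
  set β : Fin (n+1) → ℝ := fun k => (w k : ℝ) + α k with hβdef
  have hβ : ∀ k, 0 < β k := fun k =>
    add_pos_of_nonneg_of_pos (Nat.cast_nonneg _) (hα k)
  set C : ℝ := ((Nat.factorial L) : ℝ) / ∏ k, ((Nat.factorial (w k)) : ℝ) with hC
  set D : ℝ := Real.Gamma A / ∏ k, Real.Gamma (α k) with hD
  have hcongr : Set.EqOn
      (fun x : Fin n → ℝ => C * (∏ k, (Fin.snoc x (1 - ∑ i, x i) : Fin (n + 1) → ℝ) k ^ w k) *
        D * (∏ k, (Fin.snoc x (1 - ∑ i, x i) : Fin (n + 1) → ℝ) k ^ (α k - 1)))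
      (fun x : Fin n → ℝ => (C * D) *
        ∏ k, (Fin.snoc x (1 - ∑ i, x i) : Fin (n + 1) → ℝ) k ^ (β k - 1))
      {x : Fin n → ℝ | (∀ i, 0 < x i) ∧ ∑ i, x i < 1} := by
    intro x hx
    have hpos := snoc_pos hx
    simp only
    have hPQ : (∏ k, (Fin.snoc x (1 - ∑ i, x i) : Fin (n + 1) → ℝ) k ^ w k) *
        (∏ k, (Fin.snoc x (1 - ∑ i, x i) : Fin (n + 1) → ℝ) k ^ (α k - 1))
        = ∏ k, (Fin.snoc x (1 - ∑ i, x i) : Fin (n + 1) → ℝ) k ^ (β k - 1) := by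
      rw [← Finset.prod_mul_distrib]
      apply Finset.prod_congr rfl
      intro k _
      rw [← Real.rpow_natCast _ (w k), ← Real.rpow_add (hpos k)]
      congr 1
      simp only [hβdef]
      ring
    rw [show C * (∏ k, (Fin.snoc x (1 - ∑ i, x i) : Fin (n + 1) → ℝ) k ^ w k) *
        D * (∏ k, (Fin.snoc x (1 - ∑ i, x i) : Fin (n + 1) → ℝ) k ^ (α k - 1))
        = (C * D) * ((∏ k, (Fin.snoc x (1 - ∑ i, x i) : Fin (n + 1) → ℝ) k ^ w k) *
          (∏ k, (Fin.snoc x (1 - ∑ i, x i) : Fin (n + 1) → ℝ) k ^ (α k - 1))) from by ring,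
      hPQ]
  rw [setIntegral_congr_fun (simplex_measurable n) hcongr, integral_const_mul]
  have hR : (∫ x in {x : Fin n → ℝ | (∀ i, 0 < x i) ∧ ∑ i, x i < 1},
      ∏ k, (Fin.snoc x (1 - ∑ i, x i) : Fin (n + 1) → ℝ) k ^ (β k - 1))
      = (∏ k, Real.Gamma (β k)) / Real.Gamma (∑ k, β k) := by
    rw [integral_eq_lintegral_of_nonneg_ae, dirichlet_lintegral n β hβ,
      ENNReal.toReal_ofReal (div_nonneg
        (Finset.prod_nonneg fun k _ => (Real.Gamma_pos_of_pos (hβ k)).le)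
        (Real.Gamma_pos_of_pos (Finset.sum_pos (fun k _ => hβ k) Finset.univ_nonempty)).le)]
    · rw [Filter.EventuallyLE, ae_restrict_iff' (simplex_measurable n)]
      apply ae_of_all
      intro x hx
      have hpos := snoc_pos hx
      exact Finset.prod_nonneg fun k _ => Real.rpow_nonneg (hpos k).le _
    · exact (snoc_prod_measurable n β).aestronglyMeasurable
  rw [hR]
  have hsum : (∑ k, β k) = (L : ℝ) + A := by
    rw [hL, hA, hβdef]
    push_cast
    rw [Finset.sum_add_distrib]
  rw [hsum, Finset.prod_div_distrib, hD]
  have : (∏ k, Real.Gamma (β k)) = ∏ k, Real.Gamma ((w k : ℝ) + α k) := rfl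
  rw [this]
  ring
end

section
/- Let n ≥ 1, let α : Fin (n+1) → ℝ be strictly positive, set A = ∑_k α_k, and fix i : Fin n. With S_n = {x : Fin n → ℝ | (∀ j, 0 < x_j) ∧ ∑_j x_j < 1} ⊆ ℝ^n with Lebesgue measure, and writing the Dirichlet weight W(x) = (∏_{j : Fin n} x_j^{α_j − 1}) · (1 − ∑_j x_j)^{α_n − 1} where α_n is the value of α at the last index: (∫_{S_n} log(x_i) · W(x) dx) / (∫_{S_n} W(x) dx) = Γ′(α_i)/Γ(α_i) − Γ′(A)/Γ(A). (The expectation of the log of a Dirichlet coordinate is the difference of digamma values Ψ₀(α_i) − Ψ₀(A).) -/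
open Real MeasureTheory Finset

open Set ENNReal



noncomputable section

def Sset (m : ℕ) : Set (Fin m → ℝ) := {x | (∀ j, 0 < x j) ∧ ∑ j, x j < 1}

lemma measurableSet_Sset (m : ℕ) : MeasurableSet (Sset m) := by
  have : Sset m = (⋂ j, {x : Fin m → ℝ | 0 < x j}) ∩ {x : Fin m → ℝ | ∑ j, x j < 1} := by
    ext x; simp [Sset]
  rw [this]
  exact MeasurableSet.inter
    (MeasurableSet.iInter fun j => measurableSet_lt measurable_const (measurable_pi_apply j))
    (measurableSet_lt (Finset.measurable_sum _ fun j _ => measurable_pi_apply j) measurable_const)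

lemma isOpen_Sset (m : ℕ) : IsOpen (Sset m) := by
  have : Sset m = (⋂ j, {x : Fin m → ℝ | 0 < x j}) ∩ {x : Fin m → ℝ | ∑ j, x j < 1} := by
    ext x; simp [Sset]
  rw [this]
  exact IsOpen.inter
    (isOpen_iInter_of_finite fun j => isOpen_lt continuous_const (continuous_apply j))
    (isOpen_lt (by continuity) continuous_const)

lemma nonempty_Sset (m : ℕ) : (Sset m).Nonempty := by
  refine ⟨fun _ => 1 / (2 * m + 2), fun j => by positivity, ?_⟩
  simp only [Finset.sum_const, Finset.card_univ, Fintype.card_fin, nsmul_eq_mul]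
  rw [div_eq_mul_inv, one_mul]
  rw [← div_eq_mul_inv]
  rw [div_lt_one (by positivity)]
  nlinarith [Nat.cast_nonneg (α := ℝ) m]

lemma lintegral_comp_smul_pi (m : ℕ) (f : (Fin m → ℝ) → ℝ≥0∞) (hf : Measurable f)
    {r : ℝ} (hr : 0 < r) :
    ∫⁻ y, f y = ENNReal.ofReal (r ^ m) * ∫⁻ z, f (r • z) := by
  have hmap : Measure.map (r • · : (Fin m → ℝ) → _) volume
      = ENNReal.ofReal (|(r ^ (Module.finrank ℝ (Fin m → ℝ)))⁻¹|) • volume :=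
    Measure.map_addHaar_smul volume hr.ne'
  have hrank : Module.finrank ℝ (Fin m → ℝ) = m := by
    simp [Module.finrank_pi]
  have h1 : ∫⁻ z, f (r • z) = ∫⁻ y, f y ∂(Measure.map (r • ·) volume) :=
    (lintegral_map hf (measurable_const_smul r)).symm
  rw [h1, hmap, hrank, lintegral_smul_measure]
  rw [abs_of_pos (by positivity), smul_eq_mul, ← mul_assoc, ← ENNReal.ofReal_mul (by positivity)]
  rw [mul_inv_cancel₀ (by positivity : (0:ℝ) < r ^ m).ne', ENNReal.ofReal_one, one_mul]

end

noncomputable section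

lemma insertNth_sum {m : ℕ} (i : Fin (m + 1)) (t : ℝ) (y : Fin m → ℝ) :
    ∑ k, i.insertNth t y k = t + ∑ j, y j := by
  rw [Fin.sum_univ_succAbove (i.insertNth t y) i]
  simp

lemma insertNth_prod_rpow {m : ℕ} (i : Fin (m + 1)) (t : ℝ) (y : Fin m → ℝ) (b : Fin (m + 1) → ℝ) :
    ∏ k, (i.insertNth t y) k ^ (b k - 1)
      = t ^ (b i - 1) * ∏ j, y j ^ (b (i.succAbove j) - 1) := by
  have hx : ∀ F : Fin (m + 1) → ℝ, ∏ k, F k ^ (b k - 1)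
      = F i ^ (b i - 1) * ∏ j, F (i.succAbove j) ^ (b (i.succAbove j) - 1) :=
    fun F => Fin.prod_univ_succAbove (fun k => F k ^ (b k - 1)) i
  rw [hx]
  simp

lemma insertNth_mem_Sset {m : ℕ} (i : Fin (m + 1)) (t : ℝ) (y : Fin m → ℝ) :
    i.insertNth t y ∈ Sset (m + 1) ↔ (0 < t ∧ (∀ j, 0 < y j) ∧ t + ∑ j, y j < 1) := by
  have h1 : (∀ k, 0 < (i.insertNth t y : Fin (m + 1) → ℝ) k) ↔ (0 < t ∧ ∀ j, 0 < y j) := by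
    constructor
    · intro hk
      exact ⟨by simpa using hk i, fun j => by simpa using hk (i.succAbove j)⟩
    · rintro ⟨h2, h3⟩ k
      refine i.succAboveCases ?_ ?_ k
      · simpa using h2
      · intro j; simpa using h3 j
  constructor
  · rintro ⟨ha, hb⟩
    rw [insertNth_sum] at hb
    obtain ⟨h2, h3⟩ := h1.1 ha
    exact ⟨h2, h3, hb⟩
  · rintro ⟨h2, h3, h4⟩
    refine ⟨h1.2 ⟨h2, h3⟩, ?_⟩
    rw [insertNth_sum]
    exact h4

lemma dirichlet_reduction (m : ℕ) (b : Fin (m + 1) → ℝ) (c : ℝ) (i : Fin (m + 1))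
    (g : ℝ → ℝ≥0∞) (hg : Measurable g) :
    (∫⁻ x in Sset (m + 1),
        g (x i) * ENNReal.ofReal ((∏ j, x j ^ (b j - 1)) * (1 - ∑ j, x j) ^ (c - 1)))
      = (∫⁻ t in Ioo (0:ℝ) 1,
          g t * ENNReal.ofReal (t ^ (b i - 1) *
            (1 - t) ^ ((∑ j, b (i.succAbove j)) + c - 1)))
        * ∫⁻ y in Sset m, ENNReal.ofReal
            ((∏ j, y j ^ (b (i.succAbove j) - 1)) * (1 - ∑ j, y j) ^ (c - 1)) := by
  classical
  set B : ℝ := ∑ j, b (i.succAbove j) with hB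
  set J : ℝ≥0∞ := ∫⁻ y in Sset m, ENNReal.ofReal
      ((∏ j, y j ^ (b (i.succAbove j) - 1)) * (1 - ∑ j, y j) ^ (c - 1)) with hJ
  set f : (Fin (m + 1) → ℝ) → ℝ≥0∞ := fun x =>
    g (x i) * ENNReal.ofReal ((∏ j, x j ^ (b j - 1)) * (1 - ∑ j, x j) ^ (c - 1)) with hf
  have hinner_meas : Measurable (fun y : Fin m → ℝ => ENNReal.ofReal
      ((∏ j, y j ^ (b (i.succAbove j) - 1)) * (1 - ∑ j, y j) ^ (c - 1))) := by
    apply ENNReal.measurable_ofReal.comp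
    exact (Finset.measurable_prod _ fun j _ => (measurable_pi_apply j).pow_const _).mul
      ((measurable_const.sub (Finset.measurable_sum _ fun j _ =>
        measurable_pi_apply j)).pow_const _)
  have hfmeas : Measurable f := by
    apply (hg.comp (measurable_pi_apply i)).mul
    apply ENNReal.measurable_ofReal.comp
    apply Measurable.mul
    · exact Finset.measurable_prod _ fun j _ => (measurable_pi_apply j).pow_const _
    · exact (measurable_const.sub (Finset.measurable_sum _ fun j _ =>
        measurable_pi_apply j)).pow_const _
  have hFmeas : Measurable ((Sset (m + 1)).indicator f) :=
    hfmeas.indicator (measurableSet_Sset _)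
  set e := MeasurableEquiv.piFinSuccAbove (fun _ : Fin (m + 1) => ℝ) i with he
  have hmp : MeasurePreserving e.symm
      ((volume : Measure ℝ).prod (volume : Measure (Fin m → ℝ))) volume := by
    have h := measurePreserving_piFinSuccAbove (fun _ : Fin (m + 1) => (volume : Measure ℝ)) i
    exact h.symm e
  have step1 : (∫⁻ x in Sset (m + 1), f x)
      = ∫⁻ p : ℝ × (Fin m → ℝ), (Sset (m + 1)).indicator f (e.symm p)
          ∂((volume : Measure ℝ).prod (volume : Measure (Fin m → ℝ))) := by
    rw [← lintegral_indicator (measurableSet_Sset _), ← hmp.lintegral_comp hFmeas]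
  have hesymm : ∀ (t : ℝ) (y : Fin m → ℝ), e.symm (t, y) = i.insertNth t y := fun _ _ => rfl
  -- the inner integral computation
  have key : ∀ t : ℝ, (∫⁻ y : Fin m → ℝ, (Sset (m + 1)).indicator f (e.symm (t, y)))
      = (Ioo (0:ℝ) 1).indicator
          (fun t => g t * ENNReal.ofReal (t ^ (b i - 1) * (1 - t) ^ (B + c - 1)) * J) t := by
    intro t
    by_cases ht : t ∈ Ioo (0:ℝ) 1
    · rw [Set.indicator_of_mem ht]
      have ht0 : (0:ℝ) < t := ht.1
      have ht1 : t < 1 := ht.2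
      set r : ℝ := 1 - t with hr
      have hrpos : (0:ℝ) < r := by simp only [hr]; linarith
      set At : Set (Fin m → ℝ) := {y | (∀ j, 0 < y j) ∧ ∑ j, y j < r} with hAt
      set h : (Fin m → ℝ) → ℝ≥0∞ := fun y => ENNReal.ofReal
          ((∏ j, y j ^ (b (i.succAbove j) - 1)) * (r - ∑ j, y j) ^ (c - 1)) with hh
      have hhmeas : Measurable h := by
        apply ENNReal.measurable_ofReal.comp
        exact (Finset.measurable_prod _ fun j _ => (measurable_pi_apply j).pow_const _).mul
          ((measurable_const.sub (Finset.measurable_sum _ fun j _ =>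
            measurable_pi_apply j)).pow_const _)
      have hAtmeas : MeasurableSet At := by
        have : At = (⋂ j, {y : Fin m → ℝ | 0 < y j}) ∩ {y | ∑ j, y j < r} := by
          ext y; simp [hAt]
        rw [this]
        exact MeasurableSet.inter
          (MeasurableSet.iInter fun j =>
            measurableSet_lt measurable_const (measurable_pi_apply j))
          (measurableSet_lt (Finset.measurable_sum _ fun j _ => measurable_pi_apply j)
            measurable_const)
      have hmem : ∀ y : Fin m → ℝ, i.insertNth t y ∈ Sset (m + 1) ↔ y ∈ At := by
        intro y
        rw [insertNth_mem_Sset]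
        constructor
        · rintro ⟨_, h3, h4⟩
          exact ⟨h3, by linarith⟩
        · rintro ⟨h3, h4⟩
          exact ⟨ht0, h3, by linarith⟩
      have hval : ∀ y ∈ At, f (i.insertNth t y)
          = g t * ENNReal.ofReal (t ^ (b i - 1)) * h y := by
        intro y hy
        simp only [hf, hh]
        rw [Fin.insertNth_apply_same, insertNth_prod_rpow, insertNth_sum]
        have harr : ((t ^ (b i - 1) * ∏ j, y j ^ (b (i.succAbove j) - 1)) *
              (1 - (t + ∑ j, y j)) ^ (c - 1))
            = t ^ (b i - 1) *
              ((∏ j, y j ^ (b (i.succAbove j) - 1)) * (r - ∑ j, y j) ^ (c - 1)) := by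
          rw [show (1:ℝ) - (t + ∑ j, y j) = r - ∑ j, y j by rw [hr]; ring]
          ring
        rw [harr, ENNReal.ofReal_mul (by positivity : (0:ℝ) ≤ t ^ (b i - 1)), ← mul_assoc]
      -- the inner lintegral over y
      have step2 : (∫⁻ y : Fin m → ℝ, (Sset (m + 1)).indicator f (e.symm (t, y)))
          = g t * ENNReal.ofReal (t ^ (b i - 1)) * ∫⁻ y, At.indicator h y := by
        rw [← lintegral_const_mul _ (hhmeas.indicator hAtmeas)]
        congr 1
        funext y
        rw [hesymm]
        by_cases hy : y ∈ At
        · rw [Set.indicator_of_mem ((hmem y).2 hy), Set.indicator_of_mem hy, hval y hy]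
        · rw [Set.indicator_of_notMem (fun hmem' => hy ((hmem y).1 hmem')),
            Set.indicator_of_notMem hy, mul_zero]
      -- scaling y = r • z
      have hK : (0:ℝ) ≤ (∏ j, r ^ (b (i.succAbove j) - 1)) * r ^ (c - 1) := by positivity
      have step3 : (∫⁻ y, At.indicator h y)
          = ENNReal.ofReal (r ^ (B + c - 1)) * J := by
        rw [lintegral_comp_smul_pi m (At.indicator h) (hhmeas.indicator hAtmeas) hrpos]
        have hptwise : ∀ z : Fin m → ℝ, At.indicator h (r • z)
            = (Sset m).indicator (fun z =>
                ENNReal.ofReal (((∏ j, r ^ (b (i.succAbove j) - 1)) * r ^ (c - 1)) *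
                  ((∏ j, z j ^ (b (i.succAbove j) - 1)) * (1 - ∑ j, z j) ^ (c - 1)))) z := by
          intro z
          have hsumz : ∑ j, (r • z) j = r * ∑ j, z j := by
            simp only [Pi.smul_apply, smul_eq_mul]
            rw [Finset.mul_sum]
          have hmem2 : r • z ∈ At ↔ z ∈ Sset m := by
            simp only [hAt, Sset, mem_setOf_eq, Pi.smul_apply, smul_eq_mul]
            rw [show (∑ j, r * z j) = r * ∑ j, z j from (Finset.mul_sum _ _ _).symm]
            constructor
            · rintro ⟨h1, h2⟩
              refine ⟨fun j => ?_, ?_⟩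
              · have hj := h1 j
                nlinarith [hj, hrpos]
              · exact (mul_lt_iff_lt_one_right hrpos).mp (by linarith [h2])
            · rintro ⟨h1, h2⟩
              refine ⟨fun j => mul_pos hrpos (h1 j), ?_⟩
              calc r * ∑ j, z j < r * 1 := mul_lt_mul_of_pos_left h2 hrpos
                _ = r := mul_one r
          by_cases hz : z ∈ Sset m
          · rw [Set.indicator_of_mem (hmem2.2 hz), Set.indicator_of_mem hz]
            simp only [hh]
            congr 1
            have hzpos := hz.1
            have hzsum := hz.2
            have hprod : (∏ j, ((r • z) j) ^ (b (i.succAbove j) - 1))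
                = (∏ j, r ^ (b (i.succAbove j) - 1)) * ∏ j, z j ^ (b (i.succAbove j) - 1) := by
              rw [← Finset.prod_mul_distrib]
              refine Finset.prod_congr rfl fun j _ => ?_
              simp only [Pi.smul_apply, smul_eq_mul]
              exact Real.mul_rpow hrpos.le (hzpos j).le
            have hlast : (r - ∑ j, (r • z) j) ^ (c - 1)
                = r ^ (c - 1) * (1 - ∑ j, z j) ^ (c - 1) := by
              rw [hsumz, show r - r * ∑ j, z j = r * (1 - ∑ j, z j) by ring]
              exact Real.mul_rpow hrpos.le (by linarith)
            rw [hprod, hlast]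
            ring
          · rw [Set.indicator_of_notMem (fun hmem' => hz (hmem2.1 hmem')),
              Set.indicator_of_notMem hz]
        simp only [hptwise]
        rw [lintegral_indicator (measurableSet_Sset m)]
        have : ∀ z : Fin m → ℝ, ENNReal.ofReal (((∏ j, r ^ (b (i.succAbove j) - 1)) * r ^ (c - 1)) *
                  ((∏ j, z j ^ (b (i.succAbove j) - 1)) * (1 - ∑ j, z j) ^ (c - 1)))
            = ENNReal.ofReal ((∏ j, r ^ (b (i.succAbove j) - 1)) * r ^ (c - 1)) *
              ENNReal.ofReal ((∏ j, z j ^ (b (i.succAbove j) - 1)) * (1 - ∑ j, z j) ^ (c - 1)) :=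
          fun z => ENNReal.ofReal_mul hK
        simp only [this]
        rw [lintegral_const_mul _ hinner_meas, ← hJ, ← mul_assoc,
          ← ENNReal.ofReal_mul (by positivity)]
        congr 2
        have hprodr : (∏ j, r ^ (b (i.succAbove j) - 1)) = r ^ (B - (m : ℝ)) := by
          rw [← Real.rpow_sum_of_pos hrpos]
          congr 1
          rw [Finset.sum_sub_distrib, Finset.sum_const, Finset.card_univ, Fintype.card_fin]
          simp [hB]
        rw [hprodr, ← Real.rpow_natCast r m, ← Real.rpow_add hrpos, ← Real.rpow_add hrpos]
        congr 1
        ring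
      rw [step2, step3, ENNReal.ofReal_mul (by positivity : (0:ℝ) ≤ t ^ (b i - 1))]
      ring
    · -- t outside Ioo 0 1
      rw [Set.indicator_of_notMem ht]
      have hzero : ∀ y : Fin m → ℝ, (Sset (m + 1)).indicator f (e.symm (t, y)) = 0 := by
        intro y
        rw [hesymm]
        apply Set.indicator_of_notMem
        rw [insertNth_mem_Sset]
        rintro ⟨h1, h2, h3⟩
        apply ht
        have hsum : (0:ℝ) ≤ ∑ j, y j := Finset.sum_nonneg fun j _ => (h2 j).le
        exact ⟨h1, by linarith⟩
      simp only [hzero, lintegral_zero]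
  -- put it together
  have step4 : (∫⁻ x in Sset (m + 1), f x)
      = ∫⁻ t : ℝ, (Ioo (0:ℝ) 1).indicator
          (fun t => g t * ENNReal.ofReal (t ^ (b i - 1) * (1 - t) ^ (B + c - 1)) * J) t := by
    have hae : AEMeasurable (fun p : ℝ × (Fin m → ℝ) => (Sset (m + 1)).indicator f (e.symm p))
        ((volume : Measure ℝ).prod (volume : Measure (Fin m → ℝ))) :=
      (hFmeas.comp e.symm.measurable).aemeasurable
    rw [step1, lintegral_prod _ hae]
    exact lintegral_congr fun t => key t
  have hmeas1 : Measurable (fun t : ℝ =>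
      g t * ENNReal.ofReal (t ^ (b i - 1) * (1 - t) ^ (B + c - 1))) := by
    apply hg.mul
    apply ENNReal.measurable_ofReal.comp
    exact (measurable_id.pow_const _).mul ((measurable_const.sub measurable_id).pow_const _)
  rw [step4, lintegral_indicator measurableSet_Ioo]
  rw [← lintegral_mul_const _ hmeas1]

end

noncomputable section

abbrev DL (m : ℕ) (b : Fin m → ℝ) (c : ℝ) : ℝ≥0∞ :=
  ∫⁻ x in Sset m, ENNReal.ofReal ((∏ j, x j ^ (b j - 1)) * (1 - ∑ j, x j) ^ (c - 1))

lemma DL_zero (b : Fin 0 → ℝ) (c : ℝ) : DL 0 b c = 1 := by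
  have hS : Sset 0 = Set.univ := by
    ext x
    simp [Sset]
  rw [DL, hS, Measure.restrict_univ]
  have : ∀ x : Fin 0 → ℝ, ENNReal.ofReal ((∏ j, x j ^ (b j - 1)) * (1 - ∑ j, x j) ^ (c - 1))
      = 1 := by
    intro x
    simp [Real.one_rpow]
  simp only [this]
  rw [lintegral_const, one_mul]
  show (volume : Measure (Fin 0 → ℝ)) Set.univ = 1
  rw [MeasureTheory.volume_pi, Measure.pi_univ]
  simp

lemma DL_pos (m : ℕ) (b : Fin m → ℝ) (c : ℝ) : 0 < DL m b c := by
  rcases eq_zero_or_pos (DL m b c) with h0 | h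
  · exfalso
    have hmeas : Measurable (fun x : Fin m → ℝ =>
        ENNReal.ofReal ((∏ j, x j ^ (b j - 1)) * (1 - ∑ j, x j) ^ (c - 1))) := by
      apply ENNReal.measurable_ofReal.comp
      exact (Finset.measurable_prod _ fun j _ => (measurable_pi_apply j).pow_const _).mul
        ((measurable_const.sub (Finset.measurable_sum _ fun j _ =>
          measurable_pi_apply j)).pow_const _)
    have hae := (lintegral_eq_zero_iff hmeas).mp h0
    rw [Filter.EventuallyEq, ae_restrict_iff' (measurableSet_Sset m)] at hae
    have hsub : Sset m ⊆ {x : Fin m → ℝ | ¬ (x ∈ Sset m →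
        ENNReal.ofReal ((∏ j, x j ^ (b j - 1)) * (1 - ∑ j, x j) ^ (c - 1)) = (0 : ℝ≥0∞))} := by
      intro x hx
      have h1 : (0:ℝ) < ∏ j, x j ^ (b j - 1) :=
        Finset.prod_pos fun j _ => Real.rpow_pos_of_pos (hx.1 j) _
      have h2 : (0:ℝ) < (1 - ∑ j, x j) ^ (c - 1) :=
        Real.rpow_pos_of_pos (by linarith [hx.2]) _
      have h3 : ENNReal.ofReal ((∏ j, x j ^ (b j - 1)) * (1 - ∑ j, x j) ^ (c - 1)) ≠ 0 := by
        rw [Ne, ENNReal.ofReal_eq_zero, not_le]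
        positivity
      simp only [mem_setOf_eq, not_forall]
      exact ⟨hx, h3⟩
    have := measure_mono_null hsub hae
    have hop := (isOpen_Sset m).measure_pos (μ := (volume : Measure (Fin m → ℝ)))
      (nonempty_Sset m)
    rw [this] at hop
    exact lt_irrefl _ hop
  · exact h

end



noncomputable section

/-- real beta integrand integrable on Ioo 0 1 -/
lemma betaInt_integrableOn {a b : ℝ} (ha : 0 < a) (hb : 0 < b) :
    IntegrableOn (fun t : ℝ => t ^ (a - 1) * (1 - t) ^ (b - 1)) (Ioo 0 1) := by
  have hc : IntervalIntegrable (fun x : ℝ => (x : ℂ) ^ ((a : ℂ) - 1) * ((1 : ℂ) - x) ^ ((b : ℂ) - 1))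
      volume 0 1 := Complex.betaIntegral_convergent (by simpa using ha) (by simpa using hb)
  have hIc : IntegrableOn (fun x : ℝ => (x : ℂ) ^ ((a : ℂ) - 1) * ((1 : ℂ) - x) ^ ((b : ℂ) - 1))
      (Ioc 0 1) := (intervalIntegrable_iff_integrableOn_Ioc_of_le zero_le_one).mp hc
  have hIo : IntegrableOn (fun x : ℝ => (x : ℂ) ^ ((a : ℂ) - 1) * ((1 : ℂ) - x) ^ ((b : ℂ) - 1))
      (Ioo 0 1) := hIc.mono_set Ioo_subset_Ioc_self
  have heq : ∀ x ∈ Ioo (0:ℝ) 1,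
      ((x : ℂ) ^ ((a : ℂ) - 1) * ((1 : ℂ) - x) ^ ((b : ℂ) - 1)).re
        = x ^ (a - 1) * (1 - x) ^ (b - 1) := by
    intro x hx
    have h1 : ((x : ℂ)) ^ ((a : ℂ) - 1) = ((x ^ (a - 1) : ℝ) : ℂ) := by
      rw [show ((a : ℂ) - 1) = ((a - 1 : ℝ) : ℂ) by push_cast; ring,
        Complex.ofReal_cpow hx.1.le]
    have h2 : ((1 : ℂ) - (x : ℂ)) ^ ((b : ℂ) - 1) = ((((1 : ℝ) - x) ^ (b - 1) : ℝ) : ℂ) := by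
      rw [show ((1 : ℂ) - (x : ℂ)) = (((1 - x : ℝ)) : ℂ) by push_cast; ring,
        show ((b : ℂ) - 1) = ((b - 1 : ℝ) : ℂ) by push_cast; ring,
        Complex.ofReal_cpow (by linarith [hx.2])]
    rw [h1, h2, ← Complex.ofReal_mul, Complex.ofReal_re]
  have hre : IntegrableOn (fun x : ℝ => ((x : ℂ) ^ ((a : ℂ) - 1) * ((1 : ℂ) - x) ^ ((b : ℂ) - 1)).re)
      (Ioo 0 1) := hIo.re
  exact hre.congr_fun (fun x hx => heq x hx) measurableSet_Ioo

/-- the value of the real beta integral -/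
lemma betaInt_eq {a b : ℝ} (ha : 0 < a) (hb : 0 < b) :
    ∫ t in Ioo (0:ℝ) 1, t ^ (a - 1) * (1 - t) ^ (b - 1)
      = Real.Gamma a * Real.Gamma b / Real.Gamma (a + b) := by
  have key : Complex.Gamma a * Complex.Gamma b
      = Complex.Gamma (a + b) * Complex.betaIntegral a b :=
    Complex.Gamma_mul_Gamma_eq_betaIntegral (by simpa using ha) (by simpa using hb)
  have hbeta : Complex.betaIntegral (a : ℂ) (b : ℂ)
      = ((∫ t in Ioo (0:ℝ) 1, t ^ (a - 1) * (1 - t) ^ (b - 1) : ℝ) : ℂ) := by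
    rw [Complex.betaIntegral]
    have hcongr : ∀ x ∈ Set.uIcc (0:ℝ) 1,
        ((x : ℂ) ^ ((a : ℂ) - 1) * ((1 : ℂ) - x) ^ ((b : ℂ) - 1))
          = (((x ^ (a - 1) * (1 - x) ^ (b - 1) : ℝ)) : ℂ) := by
      intro x hx
      rw [Set.uIcc_of_le zero_le_one] at hx
      have h1 : ((x : ℂ)) ^ ((a : ℂ) - 1) = ((x ^ (a - 1) : ℝ) : ℂ) := by
        rw [show ((a : ℂ) - 1) = ((a - 1 : ℝ) : ℂ) by push_cast; ring,
          Complex.ofReal_cpow hx.1]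
      have h2 : ((1 : ℂ) - (x : ℂ)) ^ ((b : ℂ) - 1) = ((((1 : ℝ) - x) ^ (b - 1) : ℝ) : ℂ) := by
        rw [show ((1 : ℂ) - (x : ℂ)) = (((1 - x : ℝ)) : ℂ) by push_cast; ring,
          show ((b : ℂ) - 1) = ((b - 1 : ℝ) : ℂ) by push_cast; ring,
          Complex.ofReal_cpow (by linarith [hx.2])]
      rw [h1, h2, ← Complex.ofReal_mul]
    rw [intervalIntegral.integral_congr hcongr, intervalIntegral.integral_ofReal,
      intervalIntegral.integral_of_le zero_le_one, MeasureTheory.integral_Ioc_eq_integral_Ioo]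
  have hGa : Complex.Gamma (a : ℂ) = ((Real.Gamma a : ℝ) : ℂ) := Complex.Gamma_ofReal a
  have hGb : Complex.Gamma (b : ℂ) = ((Real.Gamma b : ℝ) : ℂ) := Complex.Gamma_ofReal b
  have hGab : Complex.Gamma ((a : ℂ) + (b : ℂ)) = ((Real.Gamma (a + b) : ℝ) : ℂ) := by
    rw [show ((a : ℂ) + (b : ℂ)) = ((a + b : ℝ) : ℂ) by push_cast; ring, Complex.Gamma_ofReal]
  rw [hGa, hGb, hGab, hbeta] at key
  have hne : Real.Gamma (a + b) ≠ 0 := (Real.Gamma_pos_of_pos (by linarith)).ne'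
  have : Real.Gamma a * Real.Gamma b
      = Real.Gamma (a + b) * ∫ t in Ioo (0:ℝ) 1, t ^ (a - 1) * (1 - t) ^ (b - 1) := by
    exact_mod_cast key
  field_simp
  linarith [this]

end

noncomputable section

lemma neg_log_le_rpow {t ε : ℝ} (ht : 0 < t) (hε : 0 < ε) :
    -Real.log t ≤ ε⁻¹ * t ^ (-ε) := by
  have h1 : Real.log (t ^ (-ε)) ≤ t ^ (-ε) - 1 :=
    Real.log_le_sub_one_of_pos (Real.rpow_pos_of_pos ht _)
  rw [Real.log_rpow ht] at h1
  have h2 : -Real.log t ≤ ε⁻¹ * (t ^ (-ε) - 1) := by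
    have h4 : -Real.log t = ε⁻¹ * (-ε * Real.log t) := by field_simp
    rw [h4]
    exact mul_le_mul_of_nonneg_left h1 (by positivity)
  have h3 : t ^ (-ε) - 1 ≤ t ^ (-ε) := by linarith
  calc -Real.log t ≤ ε⁻¹ * (t ^ (-ε) - 1) := h2
  _ ≤ ε⁻¹ * t ^ (-ε) := by apply mul_le_mul_of_nonneg_left h3 (by positivity)

lemma hasDerivAt_betaInt {a b : ℝ} (ha : 0 < a) (hb : 0 < b) :
    Integrable (fun t : ℝ => Real.log t * (t ^ (a - 1) * (1 - t) ^ (b - 1)))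
        (volume.restrict (Ioo (0:ℝ) 1)) ∧
    HasDerivAt (fun s : ℝ => ∫ t in Ioo (0:ℝ) 1, t ^ (s - 1) * (1 - t) ^ (b - 1))
      (∫ t in Ioo (0:ℝ) 1, Real.log t * (t ^ (a - 1) * (1 - t) ^ (b - 1))) a := by
  set μ := volume.restrict (Ioo (0:ℝ) 1)
  have hmeas : ∀ s : ℝ, AEStronglyMeasurable (fun t : ℝ => t ^ (s - 1) * (1 - t) ^ (b - 1)) μ := by
    intro s
    exact ((measurable_id.pow_const _).mul
      ((measurable_const.sub measurable_id).pow_const _)).aestronglyMeasurable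
  have h'meas : AEStronglyMeasurable
      (fun t : ℝ => Real.log t * (t ^ (a - 1) * (1 - t) ^ (b - 1))) μ :=
    (Real.measurable_log.mul ((measurable_id.pow_const _).mul
      ((measurable_const.sub measurable_id).pow_const _))).aestronglyMeasurable
  have hbound : Integrable (fun t : ℝ => (4 / a) * (t ^ (a / 2 - 1) * (1 - t) ^ (b - 1))) μ :=
    ((betaInt_integrableOn (by linarith) hb).const_mul _ : IntegrableOn _ _ _)
  have key := hasDerivAt_integral_of_dominated_loc_of_deriv_le
    (F := fun s t => t ^ (s - 1) * (1 - t) ^ (b - 1))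
    (F' := fun s t => Real.log t * (t ^ (s - 1) * (1 - t) ^ (b - 1)))
    (x₀ := a) (s := Metric.ball a (a / 4))
    (bound := fun t => (4 / a) * (t ^ (a / 2 - 1) * (1 - t) ^ (b - 1)))
    (Metric.ball_mem_nhds a (by positivity))
    (Filter.Eventually.of_forall hmeas)
    (betaInt_integrableOn ha hb)
    h'meas
    ?_ hbound ?_
  · exact key
  · -- bound
    refine (ae_restrict_iff' measurableSet_Ioo).2 (Filter.Eventually.of_forall ?_)
    intro t ht s hs
    rw [Metric.mem_ball, Real.dist_eq, abs_lt] at hs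
    have ht0 := ht.1
    have ht1 := ht.2
    have h1t : (0:ℝ) < 1 - t := by linarith
    have hlog : -Real.log t ≤ (4 / a) * t ^ (-(a/4)) := by
      have := neg_log_le_rpow ht0 (show (0:ℝ) < a/4 by positivity)
      calc -Real.log t ≤ (a/4)⁻¹ * t ^ (-(a/4)) := this
      _ = (4/a) * t ^ (-(a/4)) := by rw [show (a/4)⁻¹ = 4/a by field_simp]
    have hts : t ^ (s - 1) ≤ t ^ (3 * a / 4 - 1) :=
      Real.rpow_le_rpow_of_exponent_ge ht0 ht1.le (by linarith)
    have hlogt : 0 ≤ -Real.log t := by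
      simpa using Real.log_nonpos ht0.le ht1.le
    rw [norm_mul, norm_mul, Real.norm_eq_abs, Real.norm_eq_abs, Real.norm_eq_abs,
      abs_of_nonpos (Real.log_nonpos ht0.le ht1.le),
      abs_of_nonneg (Real.rpow_nonneg ht0.le _),
      abs_of_nonneg (Real.rpow_nonneg h1t.le _)]
    calc -Real.log t * (t ^ (s - 1) * (1 - t) ^ (b - 1))
        ≤ ((4 / a) * t ^ (-(a/4))) * (t ^ (3 * a / 4 - 1) * (1 - t) ^ (b - 1)) := by
          apply mul_le_mul hlog
          · exact mul_le_mul_of_nonneg_right hts (Real.rpow_nonneg h1t.le _)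
          · positivity
          · positivity
      _ = (4 / a) * (t ^ (a / 2 - 1) * (1 - t) ^ (b - 1)) := by
          rw [mul_assoc, ← mul_assoc (t ^ (-(a/4))), ← Real.rpow_add ht0 (-(a/4)) (3 * a / 4 - 1),
            show -(a/4) + (3 * a / 4 - 1) = a / 2 - 1 by ring]
  · -- differentiability
    refine (ae_restrict_iff' measurableSet_Ioo).2 (Filter.Eventually.of_forall ?_)
    intro t ht s _
    have ht0 := ht.1
    have hd : HasDerivAt (fun s : ℝ => t ^ (s - 1)) (t ^ (s - 1) * Real.log t) s := by
      have := ((Real.hasStrictDerivAt_const_rpow ht0 (s - 1)).hasDerivAt).comp s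
        ((hasDerivAt_id s).sub_const 1)
      simpa [Function.comp_def] using this
    have := hd.mul_const ((1 - t) ^ (b - 1))
    exact this.congr_deriv (by ring)

lemma oneDim_ratio {a b : ℝ} (ha : 0 < a) (hb : 0 < b) :
    (∫ t in Ioo (0:ℝ) 1, Real.log t * (t ^ (a - 1) * (1 - t) ^ (b - 1))) /
      (∫ t in Ioo (0:ℝ) 1, t ^ (a - 1) * (1 - t) ^ (b - 1)) =
    deriv Real.Gamma a / Real.Gamma a - deriv Real.Gamma (a + b) / Real.Gamma (a + b) := by
  have hBpos : 0 < ∫ t in Ioo (0:ℝ) 1, t ^ (a - 1) * (1 - t) ^ (b - 1) := by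
    rw [betaInt_eq ha hb]
    have := Real.Gamma_pos_of_pos ha
    have := Real.Gamma_pos_of_pos hb
    have := Real.Gamma_pos_of_pos (show (0:ℝ) < a + b by linarith)
    positivity
  have hGa : HasDerivAt Real.Gamma (deriv Real.Gamma a) a := by
    refine (Real.differentiableAt_Gamma fun m => ?_).hasDerivAt
    have : (0:ℝ) < a := ha
    intro h; rw [h] at this; have : (0:ℝ) ≤ (m:ℝ) := Nat.cast_nonneg m; linarith
  have hGab : HasDerivAt (fun s : ℝ => Real.Gamma (s + b)) (deriv Real.Gamma (a + b)) a := by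
    have h1 : HasDerivAt Real.Gamma (deriv Real.Gamma (a + b)) (a + b) := by
      refine (Real.differentiableAt_Gamma fun m => ?_).hasDerivAt
      have : (0:ℝ) < a + b := by linarith
      intro h; rw [h] at this; have : (0:ℝ) ≤ (m:ℝ) := Nat.cast_nonneg m; linarith
    have := h1.comp a ((hasDerivAt_id a).add_const b)
    simpa [Function.comp_def] using this
  have hGabne : Real.Gamma (a + b) ≠ 0 := (Real.Gamma_pos_of_pos (by linarith)).ne'
  have hGane : Real.Gamma a ≠ 0 := (Real.Gamma_pos_of_pos ha).ne'
  have hGbne : Real.Gamma b ≠ 0 := (Real.Gamma_pos_of_pos hb).ne'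
  -- derivative of s ↦ Γ s Γ b / Γ (s+b)
  have hG : HasDerivAt (fun s : ℝ => Real.Gamma s * Real.Gamma b / Real.Gamma (s + b))
      ((deriv Real.Gamma a * Real.Gamma b * Real.Gamma (a + b) -
        Real.Gamma a * Real.Gamma b * deriv Real.Gamma (a + b)) / (Real.Gamma (a + b)) ^ 2) a :=
    (hGa.mul_const (Real.Gamma b)).div hGab hGabne
  -- the beta integral has the same derivative as hG, by local equality
  have heq : (fun s : ℝ => ∫ t in Ioo (0:ℝ) 1, t ^ (s - 1) * (1 - t) ^ (b - 1))
      =ᶠ[nhds a] (fun s : ℝ => Real.Gamma s * Real.Gamma b / Real.Gamma (s + b)) := by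
    filter_upwards [eventually_gt_nhds ha] with s hs
    exact betaInt_eq hs hb
  have hD := (hasDerivAt_betaInt ha hb).2
  have hG' : HasDerivAt (fun s : ℝ => Real.Gamma s * Real.Gamma b / Real.Gamma (s + b))
      (∫ t in Ioo (0:ℝ) 1, Real.log t * (t ^ (a - 1) * (1 - t) ^ (b - 1))) a :=
    hD.congr_of_eventuallyEq heq.symm
  have hNval : (∫ t in Ioo (0:ℝ) 1, Real.log t * (t ^ (a - 1) * (1 - t) ^ (b - 1)))
      = (deriv Real.Gamma a * Real.Gamma b * Real.Gamma (a + b) -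
        Real.Gamma a * Real.Gamma b * deriv Real.Gamma (a + b)) / (Real.Gamma (a + b)) ^ 2 :=
    hG'.unique hG
  rw [hNval, betaInt_eq ha hb]
  field_simp

end


noncomputable section

lemma BL_repr {a β : ℝ} (ha : 0 < a) (hβ : 0 < β) :
    (∫⁻ t in Ioo (0:ℝ) 1, ENNReal.ofReal (t ^ (a - 1) * (1 - t) ^ (β - 1)))
      = ENNReal.ofReal (∫ t in Ioo (0:ℝ) 1, t ^ (a - 1) * (1 - t) ^ (β - 1)) := by
  have hint := betaInt_integrableOn ha hβ
  have hnn : 0 ≤ᵐ[volume.restrict (Ioo (0:ℝ) 1)]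
      fun t => t ^ (a - 1) * (1 - t) ^ (β - 1) := by
    refine (ae_restrict_iff' measurableSet_Ioo).2 (Filter.Eventually.of_forall fun t ht => ?_)
    exact mul_nonneg (Real.rpow_nonneg ht.1.le _)
      (Real.rpow_nonneg (by linarith [ht.2]) _)
  exact (ofReal_integral_eq_lintegral_ofReal hint hnn).symm

lemma BL_lt_top {a β : ℝ} (ha : 0 < a) (hβ : 0 < β) :
    (∫⁻ t in Ioo (0:ℝ) 1, ENNReal.ofReal (t ^ (a - 1) * (1 - t) ^ (β - 1))) < ⊤ := by
  rw [BL_repr ha hβ]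
  exact ENNReal.ofReal_lt_top

lemma DL_lt_top : ∀ (m : ℕ) (b : Fin m → ℝ), (∀ j, 0 < b j) → ∀ (c : ℝ), 0 < c →
    DL m b c < ⊤ := by
  intro m
  induction m with
  | zero =>
    intro b hb c hc
    rw [DL_zero]
    exact ENNReal.one_lt_top
  | succ m ih =>
    intro b hb c hc
    have hred := dirichlet_reduction m b c 0 (fun _ => (1 : ℝ≥0∞)) measurable_const
    simp only [one_mul] at hred
    have hsum : (0:ℝ) < (∑ j, b ((0 : Fin (m + 1)).succAbove j)) + c := by
      have : (0:ℝ) ≤ ∑ j, b ((0 : Fin (m + 1)).succAbove j) :=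
        Finset.sum_nonneg fun j _ => (hb _).le
      linarith
    calc DL (m + 1) b c
        = (∫⁻ t in Ioo (0:ℝ) 1, ENNReal.ofReal (t ^ (b 0 - 1) *
            (1 - t) ^ ((∑ j, b ((0 : Fin (m + 1)).succAbove j)) + c - 1)))
          * DL m (fun j => b ((0 : Fin (m + 1)).succAbove j)) c := hred
      _ < ⊤ := ENNReal.mul_lt_top (BL_lt_top (hb 0) hsum)
          (ih (fun j => b ((0 : Fin (m + 1)).succAbove j)) (fun j => hb _) c hc)

end


noncomputable section

lemma dirichlet_final (m : ℕ) (b : Fin (m + 1) → ℝ) (hb : ∀ j, 0 < b j) (c : ℝ) (hc : 0 < c)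
    (i : Fin (m + 1)) (A : ℝ) (hA : A = (∑ j, b j) + c) :
    (∫ x in Sset (m + 1),
        Real.log (x i) * ((∏ j, x j ^ (b j - 1)) * (1 - ∑ j, x j) ^ (c - 1))) /
      (∫ x in Sset (m + 1), (∏ j, x j ^ (b j - 1)) * (1 - ∑ j, x j) ^ (c - 1))
      = deriv Real.Gamma (b i) / Real.Gamma (b i) - deriv Real.Gamma A / Real.Gamma A := by
  classical
  set a : ℝ := b i with ha'
  set B : ℝ := ∑ j, b (i.succAbove j) with hB
  have hsplit : (∑ j, b j) = a + B := Fin.sum_univ_succAbove b i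
  have hBc : B + c = A - a := by rw [hA, hsplit]; ring
  have hapos : 0 < a := hb i
  have hβ : 0 < B + c := by
    have : (0:ℝ) ≤ B := Finset.sum_nonneg fun j _ => (hb _).le
    linarith
  have haA : a + (B + c) = A := by linarith
  -- measurability of the weight
  have hWmeas : Measurable (fun x : Fin (m + 1) → ℝ =>
      (∏ j, x j ^ (b j - 1)) * (1 - ∑ j, x j) ^ (c - 1)) :=
    (Finset.measurable_prod _ fun j _ => (measurable_pi_apply j).pow_const _).mul
      ((measurable_const.sub (Finset.measurable_sum _ fun j _ =>
        measurable_pi_apply j)).pow_const _)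
  -- basic facts on the set
  have hxi_mem : ∀ x ∈ Sset (m + 1), 0 < x i ∧ x i < 1 := by
    intro x hx
    refine ⟨hx.1 i, lt_of_le_of_lt ?_ hx.2⟩
    exact Finset.single_le_sum (fun j _ => (hx.1 j).le) (Finset.mem_univ i)
  have hWnn : ∀ x ∈ Sset (m + 1),
      0 ≤ (∏ j, x j ^ (b j - 1)) * (1 - ∑ j, x j) ^ (c - 1) := by
    intro x hx
    exact mul_nonneg (Finset.prod_nonneg fun j _ => Real.rpow_nonneg (hx.1 j).le _)
      (Real.rpow_nonneg (by linarith [hx.2]) _)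
  have hlognn : ∀ x ∈ Sset (m + 1), (0:ℝ) ≤ -Real.log (x i) := by
    intro x hx
    obtain ⟨h1, h2⟩ := hxi_mem x hx
    simpa using Real.log_nonpos h1.le h2.le
  -- denominator
  have denom_eq : (∫ x in Sset (m + 1), (∏ j, x j ^ (b j - 1)) * (1 - ∑ j, x j) ^ (c - 1))
      = (DL (m + 1) b c).toReal := by
    rw [integral_eq_lintegral_of_nonneg_ae
      ((ae_restrict_iff' (measurableSet_Sset _)).2 (Filter.Eventually.of_forall hWnn))
      hWmeas.aestronglyMeasurable]
  -- numerator
  set NL : ℝ≥0∞ := ∫⁻ x in Sset (m + 1),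
      ENNReal.ofReal ((-Real.log (x i)) *
        ((∏ j, x j ^ (b j - 1)) * (1 - ∑ j, x j) ^ (c - 1))) with hNL
  have num_eq : (∫ x in Sset (m + 1),
        Real.log (x i) * ((∏ j, x j ^ (b j - 1)) * (1 - ∑ j, x j) ^ (c - 1)))
      = -(NL.toReal) := by
    have h1 : (∫ x in Sset (m + 1),
          Real.log (x i) * ((∏ j, x j ^ (b j - 1)) * (1 - ∑ j, x j) ^ (c - 1)))
        = -∫ x in Sset (m + 1),
            (-Real.log (x i)) * ((∏ j, x j ^ (b j - 1)) * (1 - ∑ j, x j) ^ (c - 1)) := by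
      rw [← integral_neg]
      simp only [neg_mul, neg_neg]
    rw [h1]
    congr 1
    rw [integral_eq_lintegral_of_nonneg_ae
      ((ae_restrict_iff' (measurableSet_Sset _)).2 (Filter.Eventually.of_forall
        (fun x hx => mul_nonneg (hlognn x hx) (hWnn x hx))))
      ((Real.measurable_log.comp (measurable_pi_apply i)).neg.mul hWmeas).aestronglyMeasurable]
  -- factorization of denominator
  have hred1 := dirichlet_reduction m b c i (fun _ => (1 : ℝ≥0∞)) measurable_const
  simp only [one_mul] at hred1
  -- factorization of numerator
  have hred2 := dirichlet_reduction m b c i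
    (fun t => ENNReal.ofReal (-Real.log t))
    (ENNReal.measurable_ofReal.comp Real.measurable_log.neg)
  beta_reduce at hred2
  have hNL_eq : NL = (∫⁻ t in Ioo (0:ℝ) 1,
        ENNReal.ofReal (-Real.log t) * ENNReal.ofReal (t ^ (b i - 1) * (1 - t) ^ (B + c - 1)))
      * DL m (fun j => b (i.succAbove j)) c := by
    rw [hNL, ← hred2]
    refine setLIntegral_congr_fun (measurableSet_Sset _)
      (fun x hx => ?_)
    exact ENNReal.ofReal_mul (hlognn x hx)
  -- 1D lintegrals to Bochner
  have hD1 : (∫⁻ t in Ioo (0:ℝ) 1, ENNReal.ofReal (t ^ (a - 1) * (1 - t) ^ ((B + c) - 1)))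
      = ENNReal.ofReal (∫ t in Ioo (0:ℝ) 1, t ^ (a - 1) * (1 - t) ^ ((B + c) - 1)) :=
    BL_repr hapos hβ
  have hint_log : Integrable
      (fun t : ℝ => (-Real.log t) * (t ^ (a - 1) * (1 - t) ^ ((B + c) - 1)))
      (volume.restrict (Ioo (0:ℝ) 1)) := by
    have h := ((hasDerivAt_betaInt hapos hβ).1).neg
    refine h.congr (Filter.Eventually.of_forall fun t => ?_)
    simp only [Pi.neg_apply]
    ring
  have hN1' : (∫⁻ t in Ioo (0:ℝ) 1,
        ENNReal.ofReal (-Real.log t) * ENNReal.ofReal (t ^ (a - 1) * (1 - t) ^ ((B + c) - 1)))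
      = ∫⁻ t in Ioo (0:ℝ) 1, ENNReal.ofReal ((-Real.log t) *
          (t ^ (a - 1) * (1 - t) ^ ((B + c) - 1))) := by
    refine setLIntegral_congr_fun measurableSet_Ioo
      (fun t ht => ?_)
    exact (ENNReal.ofReal_mul (by simpa using Real.log_nonpos ht.1.le ht.2.le)).symm
  have hN1 : (∫⁻ t in Ioo (0:ℝ) 1,
        ENNReal.ofReal (-Real.log t) * ENNReal.ofReal (t ^ (a - 1) * (1 - t) ^ ((B + c) - 1)))
      = ENNReal.ofReal (∫ t in Ioo (0:ℝ) 1,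
          (-Real.log t) * (t ^ (a - 1) * (1 - t) ^ ((B + c) - 1))) := by
    have hnn : 0 ≤ᵐ[volume.restrict (Ioo (0:ℝ) 1)]
        (fun t : ℝ => (-Real.log t) * (t ^ (a - 1) * (1 - t) ^ ((B + c) - 1))) := by
      refine (ae_restrict_iff' measurableSet_Ioo).2 (Filter.Eventually.of_forall fun t ht => ?_)
      have h2 : (0:ℝ) ≤ -Real.log t := by
        simpa using Real.log_nonpos ht.1.le ht.2.le
      exact mul_nonneg h2 (mul_nonneg (Real.rpow_nonneg ht.1.le _)
        (Real.rpow_nonneg (by linarith [ht.2]) _))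
    rw [hN1', ← ofReal_integral_eq_lintegral_ofReal hint_log hnn]
  -- nonnegativity of the two 1D Bochner integrals
  have hBdennn : 0 ≤ ∫ t in Ioo (0:ℝ) 1, t ^ (a - 1) * (1 - t) ^ ((B + c) - 1) := by
    refine integral_nonneg_of_ae ((ae_restrict_iff' measurableSet_Ioo).2
      (Filter.Eventually.of_forall fun t ht => ?_))
    exact mul_nonneg (Real.rpow_nonneg ht.1.le _) (Real.rpow_nonneg (by linarith [ht.2]) _)
  have hBnumnn : 0 ≤ ∫ t in Ioo (0:ℝ) 1,
      (-Real.log t) * (t ^ (a - 1) * (1 - t) ^ ((B + c) - 1)) := by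
    refine integral_nonneg_of_ae ((ae_restrict_iff' measurableSet_Ioo).2
      (Filter.Eventually.of_forall fun t ht => ?_))
    have h2 : (0:ℝ) ≤ -Real.log t := by
      simpa using Real.log_nonpos ht.1.le ht.2.le
    exact mul_nonneg h2 (mul_nonneg (Real.rpow_nonneg ht.1.le _)
      (Real.rpow_nonneg (by linarith [ht.2]) _))
  -- the inner (m-dimensional) integral
  have hI0 : (DL m (fun j => b (i.succAbove j)) c).toReal ≠ 0 :=
    (ENNReal.toReal_pos (DL_pos m _ c).ne'
      (DL_lt_top m _ (fun j => hb _) c hc).ne).ne'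
  -- put everything together
  have hred1' : DL (m + 1) b c = (∫⁻ t in Ioo (0:ℝ) 1,
      ENNReal.ofReal (t ^ (a - 1) * (1 - t) ^ ((B + c) - 1)))
        * DL m (fun j => b (i.succAbove j)) c := hred1
  rw [num_eq, denom_eq, hred1', hNL_eq, ENNReal.toReal_mul, ENNReal.toReal_mul]
  rw [neg_div, mul_div_mul_right _ _ hI0, ← neg_div]
  rw [hN1, hD1, ENNReal.toReal_ofReal hBnumnn, ENNReal.toReal_ofReal hBdennn]
  have harr : -(∫ t in Ioo (0:ℝ) 1, (-Real.log t) * (t ^ (a - 1) * (1 - t) ^ ((B + c) - 1)))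
      = ∫ t in Ioo (0:ℝ) 1, Real.log t * (t ^ (a - 1) * (1 - t) ^ ((B + c) - 1)) := by
    rw [← integral_neg]
    simp only [neg_mul, neg_neg]
  rw [harr]
  have := oneDim_ratio hapos hβ
  rw [haA] at this
  exact this

end

/-- The expectation of the log of a Dirichlet coordinate is the difference of digamma
values `Ψ₀(α i) − Ψ₀(A)`. -/
theorem dirichlet_expectation_log
    (n : ℕ) (hn : 1 ≤ n) (α : Fin (n + 1) → ℝ) (hα : ∀ k, 0 < α k)
    (A : ℝ) (hA : A = ∑ k, α k) (i : Fin n) :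
    (∫ x in {x : Fin n → ℝ | (∀ j, 0 < x j) ∧ ∑ j, x j < 1},
        Real.log (x i) *
          ((∏ j : Fin n, x j ^ (α j.castSucc - 1)) *
            (1 - ∑ j, x j) ^ (α (Fin.last n) - 1))) /
      (∫ x in {x : Fin n → ℝ | (∀ j, 0 < x j) ∧ ∑ j, x j < 1},
        (∏ j : Fin n, x j ^ (α j.castSucc - 1)) *
          (1 - ∑ j, x j) ^ (α (Fin.last n) - 1)) =
      deriv Real.Gamma (α i.castSucc) / Real.Gamma (α i.castSucc) -
        deriv Real.Gamma A / Real.Gamma A := by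
  obtain ⟨m, rfl⟩ : ∃ m, n = m + 1 := ⟨n - 1, (Nat.succ_pred_eq_of_pos hn).symm⟩
  have hA' : A = (∑ j : Fin (m + 1), α j.castSucc) + α (Fin.last (m + 1)) := by
    rw [hA, Fin.sum_univ_castSucc]
  exact dirichlet_final m (fun j => α j.castSucc) (fun j => hα _)
    (α (Fin.last (m + 1))) (hα _) i A hA'
end
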